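/- Let a = (a_1,...,a_k) ∈ Part(n) with a_k − a_{k−1} > 1. Set s = a_{k−1} + 1, write a_k − 1 = q·s + r with 0 ≤ r < s, and suppose q > 1. Then the sequence b' = (a_1,...,a_{k−2}, s, s, ..., s, s + r), where s appears q times before the last component s + r, is a partition of n and is the partition immediately next to a in Part(n) under the lexicographic order. -/

import Mathlib

/-- A partition of `n` (in the sense of the paper): a non-decreasing list of
positive integers with at least two components summing to `n`. -/
def IsPartition (n : ℕ) (a : List ℕ) : Prop :=
  a.Pairwise (· ≤ ·) ∧ 2 ≤ a.length ∧ (∀ x ∈ a, 0 < x) ∧ a.sum = n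

/-- Lexicographic order on partitions. -/
def PartLT (a b : List ℕ) : Prop := List.Lex (· < ·) a b

private lemma lex_append_left (c : List ℕ) {a b : List ℕ}
    (h : List.Lex (· < ·) a b) : List.Lex (· < ·) (c ++ a) (c ++ b) := by
  induction c with
  | nil => exact h
  | cons hd tl ih => exact List.Lex.cons ih

private lemma lex_append_cases (c : List ℕ) : ∀ (d a : List ℕ),
    List.Lex (· < ·) (c ++ a) d →
    (∃ t, d = c ++ t ∧ List.Lex (· < ·) a t) ∨ (∀ e, List.Lex (· < ·) (c ++ e) d) := by
  induction c with
  | nil => intro d a h; exact Or.inl ⟨d, rfl, h⟩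
  | cons hd tl ih =>
    intro d a hlex
    cases hlex with
    | cons h' =>
      rcases ih _ _ h' with ⟨t, rfl, ht⟩ | hall
      · exact Or.inl ⟨t, rfl, ht⟩
      · exact Or.inr fun e => List.Lex.cons (hall e)
    | rel h' => exact Or.inr fun e => List.Lex.rel h'

private lemma sorted_rep (s r : ℕ) : ∀ m,
    (List.replicate m s ++ [s + r]).Pairwise (· ≤ ·) := by
  intro m
  induction m with
  | zero => simp
  | succ m ih =>
    rw [List.replicate_succ, List.cons_append, List.pairwise_cons]
    refine ⟨?_, ih⟩
    intro b hb
    simp only [List.mem_append, List.mem_replicate, List.mem_singleton] at hb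
    rcases hb with ⟨_, rfl⟩ | rfl <;> omega

private lemma min_lex (s r : ℕ) (hs : 0 < s) (hr : r < s) :
    ∀ m (t : List ℕ), t.Pairwise (· ≤ ·) → (∀ z ∈ t, s ≤ z) →
      t.sum = (m + 1) * s + r →
      t = List.replicate m s ++ [s + r] ∨
        List.Lex (· < ·) (List.replicate m s ++ [s + r]) t := by
  intro m
  induction m with
  | zero =>
    intro t hsort hge hsum
    match t with
    | [] =>
      exfalso
      have hpos' : 0 < (0 + 1) * s := Nat.mul_pos (by omega) hs
      simp at hsum
      omega
    | [h] =>
      left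
      simp at hsum ⊢
      omega
    | h :: h2 :: rest =>
      exfalso
      have h1 : s ≤ h := hge h (by simp)
      have h2' : s ≤ h2 := hge h2 (by simp)
      simp [List.sum_cons] at hsum
      omega
  | succ m ih =>
    intro t hsort hge hsum
    match t with
    | [] =>
      exfalso
      have hpos' : 0 < (m + 1 + 1) * s := Nat.mul_pos (by omega) hs
      simp at hsum
      omega
    | h :: rest =>
      have hh : s ≤ h := hge h (by simp)
      rcases eq_or_lt_of_le hh with heq | hlt
      · -- h = s
        have hrest_sorted : rest.Pairwise (· ≤ ·) := (List.pairwise_cons.mp hsort).2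
        have hrest_ge : ∀ z ∈ rest, s ≤ z := fun z hz => hge z (by simp [hz])
        have hrs : rest.sum = (m + 1) * s + r := by
          have e1 : (m + 1 + 1) * s = (m + 1) * s + s := by ring
          rw [List.sum_cons] at hsum
          omega
        rcases ih rest hrest_sorted hrest_ge hrs with hrEq | hrLt
        · left
          rw [List.replicate_succ, List.cons_append, ← heq, hrEq]
        · right
          rw [List.replicate_succ, List.cons_append, ← heq]
          exact List.Lex.cons hrLt
      · right
        rw [List.replicate_succ, List.cons_append]
        exact List.Lex.rel hlt

private lemma head_gt (x y h : ℕ) (rest : List ℕ)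
    (ht : List.Lex (· < ·) [x, y] (h :: rest))
    (hsum : (h :: rest).sum = x + y) (hpos : ∀ z ∈ h :: rest, 0 < z) : x < h := by
  cases ht with
  | rel h' => exact h'
  | cons h' =>
    exfalso
    rw [List.sum_cons] at hsum
    cases h' with
    | rel h'' =>
      rename_i b l
      rw [List.sum_cons] at hsum
      omega
    | cons h'' =>
      rename_i l
      cases h'' with
      | nil =>
        rename_i z zs
        have hz : 0 < z := hpos z (by simp)
        simp [List.sum_cons] at hsum
        omega

/-- if a = (a₁,…,a_{k-2},x,y) ∈ Part(n) with y - x > 1, s = x+1,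
y - 1 = q·s + r with 0 ≤ r < s and q > 1, then
b' = (a₁,…,a_{k-2}, s,…,s, s + r), with s appearing q times, is a partition
of n and is the partition immediately next to a in Part(n). -/
theorem next_partition_case_q_gt_one (n : ℕ) (c : List ℕ) (x y : ℕ)
    (ha : IsPartition n (c ++ [x, y])) (hxy : x + 1 < y)
    (hq : 1 < (y - 1) / (x + 1)) :
    IsPartition n
      (c ++ List.replicate ((y - 1) / (x + 1)) (x + 1) ++ [(x + 1) + (y - 1) % (x + 1)]) ∧
    PartLT (c ++ [x, y])
      (c ++ List.replicate ((y - 1) / (x + 1)) (x + 1) ++ [(x + 1) + (y - 1) % (x + 1)]) ∧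
    ∀ d : List ℕ, IsPartition n d → PartLT (c ++ [x, y]) d →
      d = c ++ List.replicate ((y - 1) / (x + 1)) (x + 1) ++ [(x + 1) + (y - 1) % (x + 1)] ∨
      PartLT (c ++ List.replicate ((y - 1) / (x + 1)) (x + 1) ++ [(x + 1) + (y - 1) % (x + 1)]) d := by
  obtain ⟨hsorted, hlen, hpos, hsum⟩ := ha
  set s := x + 1 with hs_def
  set q := (y - 1) / s with hq_def
  set r := (y - 1) % s with hr_def
  have hs : 0 < s := by omega
  have hr : r < s := Nat.mod_lt _ hs
  have hdm : s * q + r = y - 1 := Nat.div_add_mod (y - 1) s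
  have hy : 2 ≤ y := by omega
  have hkey : x + y = (q + 1) * s + r := by
    have e1 : (q + 1) * s = s * q + s := by ring
    omega
  have hcsum : c.sum + (x + y) = n := by
    simpa [List.sum_append] using hsum
  have hc_le : ∀ z ∈ c, z ≤ x := by
    intro z hz
    exact (List.pairwise_append.mp hsorted).2.2 z hz x (by simp)
  have hc_sorted : c.Pairwise (· ≤ ·) := (List.pairwise_append.mp hsorted).1
  set u : List ℕ := List.replicate q s ++ [s + r] with hu_def
  have hu_sum : u.sum = (q + 1) * s + r := by
    simp [hu_def, List.sum_append, List.sum_replicate]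
    ring
  have hu_sorted : u.Pairwise (· ≤ ·) := sorted_rep s r q
  have hu_ge : ∀ b ∈ u, s ≤ b := by
    intro b hbu
    simp only [hu_def, List.mem_append, List.mem_replicate, List.mem_singleton] at hbu
    rcases hbu with ⟨_, rfl⟩ | rfl <;> omega
  have hb_eq : c ++ List.replicate q s ++ [s + r] = c ++ u := by
    rw [hu_def, List.append_assoc]
  rw [hb_eq]
  obtain ⟨p, hp⟩ : ∃ p, q = p + 1 := ⟨q - 1, by omega⟩
  have hu_cons : u = s :: (List.replicate p s ++ [s + r]) := by
    rw [hu_def, hp, List.replicate_succ, List.cons_append]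
  have hb_part : IsPartition n (c ++ u) := by
    refine ⟨?_, ?_, ?_, ?_⟩
    · refine List.pairwise_append.mpr ⟨hc_sorted, hu_sorted, ?_⟩
      intro a hac b hbu
      have := hc_le a hac
      have := hu_ge b hbu
      omega
    · simp [hu_def]; omega
    · intro z hz
      rcases List.mem_append.mp hz with hzc | hzu
      · exact hpos z (by simp [hzc])
      · have := hu_ge z hzu; omega
    · rw [List.sum_append, hu_sum, ← hkey, hcsum]
  refine ⟨hb_part, ?_, ?_⟩
  · refine lex_append_left c ?_
    rw [hu_cons]
    exact List.Lex.rel (by omega)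
  · intro d hd hlt
    obtain ⟨hd_sorted, hd_len, hd_pos, hd_sum⟩ := hd
    rcases lex_append_cases c d [x, y] hlt with ⟨t, rfl, ht⟩ | hall
    · -- d = c ++ t
      have ht_sum : t.sum = x + y := by
        rw [List.sum_append] at hd_sum
        omega
      have ht_sorted : t.Pairwise (· ≤ ·) := (List.pairwise_append.mp hd_sorted).2.1
      match t, ht, ht_sum, ht_sorted with
      | h :: rest, ht, ht_sum, ht_sorted =>
        have hhead : x < h := by
          refine head_gt x y h rest ht ht_sum ?_
          intro z hz
          exact hd_pos z (by simp [hz])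
        have ht_ge : ∀ z ∈ h :: rest, s ≤ z := by
          intro z hz
          rcases List.mem_cons.mp hz with rfl | hz'
          · omega
          · have := List.rel_of_pairwise_cons ht_sorted hz'
            omega
        have ht_sum' : (h :: rest).sum = (q + 1) * s + r := by rw [ht_sum, hkey]
        rcases min_lex s r hs hr q (h :: rest) ht_sorted ht_ge ht_sum' with hEq | hLt
        · left; rw [hEq]
        · right; exact lex_append_left c hLt
    · right
      exact hall u
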